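/- If β ≥ 1, then the convex hull of F(ℝ₊ⁿ) equals {(x,z) ∈ ℝ₊ⁿ × ℝ : ℓ ≤ z ≤ u and z − z₀ ≤ (γ ∏_{i=1}^n xᵢ^{aᵢ})^{1/β}}. -/

import Mathlib

open Real Finset

lemma geom_concave_aux (n : ℕ) (w : Fin n → ℝ) (hw : ∀ i, 0 < w i) (hw1 : ∑ i, w i = 1)
    (p q : Fin n → ℝ) (hp : ∀ i, 0 ≤ p i) (hq : ∀ i, 0 ≤ q i)
    (θ τ : ℝ) (hθ : 0 ≤ θ) (hτ : 0 ≤ τ) (hθτ : θ + τ = 1) :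
    θ * ∏ i, p i ^ w i + τ * ∏ i, q i ^ w i ≤ ∏ i, (θ * p i + τ * q i) ^ w i := by
  rcases eq_or_lt_of_le hθ with h0 | hθ'
  · have hτ1 : τ = 1 := by linarith
    simp [← h0, hτ1]
  rcases eq_or_lt_of_le hτ with h0 | hτ'
  · have hθ1 : θ = 1 := by linarith
    simp [← h0, hθ1]
  set m : Fin n → ℝ := fun i => θ * p i + τ * q i with hm_def
  have hm : ∀ i, 0 ≤ m i := fun i => by exact add_nonneg (mul_nonneg hθ (hp i)) (mul_nonneg hτ (hq i))
  by_cases hz : ∃ i, m i = 0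
  · obtain ⟨i, hi⟩ := hz
    simp only [hm_def] at hi
    have hpi : p i = 0 := by nlinarith [hp i, hq i]
    have hqi : q i = 0 := by nlinarith [hp i, hq i]
    have h1 : ∏ i, p i ^ w i = 0 :=
      prod_eq_zero (mem_univ i) (by rw [hpi]; exact zero_rpow (hw i).ne')
    have h2 : ∏ i, q i ^ w i = 0 :=
      prod_eq_zero (mem_univ i) (by rw [hqi]; exact zero_rpow (hw i).ne')
    have h3 : 0 ≤ ∏ i, m i ^ w i := prod_nonneg fun i _ => rpow_nonneg (hm i) _
    rw [h1, h2]; simpa using h3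
  push_neg at hz
  have hm' : ∀ i, 0 < m i := fun i => lt_of_le_of_ne (hm i) (Ne.symm (hz i))
  have hGm : 0 ≤ ∏ i, m i ^ w i := prod_nonneg fun i _ => rpow_nonneg (hm i) _
  have key : ∀ r : Fin n → ℝ, (∀ i, 0 ≤ r i) →
      ∏ i, r i ^ w i ≤ (∏ i, m i ^ w i) * ∑ i, w i * (r i / m i) := by
    intro r hr
    have h1 : ∏ i, r i ^ w i = (∏ i, m i ^ w i) * ∏ i, (r i / m i) ^ w i := by
      rw [← Finset.prod_mul_distrib]
      refine Finset.prod_congr rfl fun i _ => ?_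
      rw [← Real.mul_rpow (hm i) (div_nonneg (hr i) (hm i))]
      rw [mul_comm (m i), div_mul_cancel₀ _ (hz i)]
    rw [h1]
    exact mul_le_mul_of_nonneg_left
      (Real.geom_mean_le_arith_mean_weighted univ w (fun i => r i / m i)
        (fun i _ => (hw i).le) hw1 (fun i _ => div_nonneg (hr i) (hm i))) hGm
  have hkp := key p hp
  have hkq := key q hq
  have hsum : θ * (∑ i, w i * (p i / m i)) + τ * (∑ i, w i * (q i / m i)) = 1 := by
    rw [Finset.mul_sum, Finset.mul_sum, ← Finset.sum_add_distrib]
    rw [show ∑ i, (θ * (w i * (p i / m i)) + τ * (w i * (q i / m i))) = ∑ i, w i from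
      Finset.sum_congr rfl fun i _ => by field_simp [hz i]; ring]
    exact hw1
  have hfin : (∏ i, m i ^ w i) *
      (θ * (∑ i, w i * (p i / m i)) + τ * (∑ i, w i * (q i / m i))) = ∏ i, m i ^ w i := by
    rw [hsum, mul_one]
  nlinarith [mul_le_mul_of_nonneg_left hkp hθ'.le, mul_le_mul_of_nonneg_left hkq hτ'.le]

section
variable {β ℓ u z₀ γ : ℝ}

-- scalar chord lemma
lemma chord_le (hℓ : 0 < ℓ) (hℓu : ℓ < u) (hβ1 : 1 ≤ β)
    (hz₀ : z₀ = (u ^ (1 / β) * ℓ - ℓ ^ (1 / β) * u) / (u ^ (1 / β) - ℓ ^ (1 / β)))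
    {z : ℝ} (h1 : ℓ ≤ z) (h2 : z ≤ u) :
    z ≤ z₀ + (u - ℓ) / (u ^ (1 / β) - ℓ ^ (1 / β)) * z ^ (1 / β) := by
  have hβ0 : (0:ℝ) < β := by linarith
  have hβne : β ≠ 0 := hβ0.ne'
  have hu : 0 < u := lt_trans hℓ hℓu
  have hLU : ℓ ^ (1/β) < u ^ (1/β) := rpow_lt_rpow hℓ.le hℓu (by positivity)
  have hUL : u ^ (1/β) - ℓ ^ (1/β) ≠ 0 := sub_ne_zero.2 hLU.ne'
  have hL : (0:ℝ) < ℓ ^ (1/β) := rpow_pos_of_pos hℓ _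
  have hU0 : (0:ℝ) < u ^ (1/β) := rpow_pos_of_pos hu _
  have huℓ : u - ℓ ≠ 0 := sub_ne_zero.2 hℓu.ne'
  set L := ℓ ^ (1/β)
  set U := u ^ (1/β)
  set c := (u - ℓ) / (U - L) with hc_def
  have hc : 0 < c := div_pos (by linarith) (by linarith)
  have hz₀L : z₀ + c * L = ℓ := by
    rw [hz₀, hc_def]; field_simp; ring
  have hz₀U : z₀ + c * U = u := by
    rw [hz₀, hc_def]; field_simp; ring
  set θ := (u - z) / (u - ℓ) with hθ_def
  have hθ0 : 0 ≤ θ := div_nonneg (by linarith) (by linarith)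
  have hθ1 : θ ≤ 1 := by rw [hθ_def, div_le_one (by linarith)]; linarith
  have hzθ : z = θ * ℓ + (1 - θ) * u := by
    rw [hθ_def]; field_simp; ring
  have hLβ : L ^ β = ℓ := by
    rw [← Real.rpow_mul hℓ.le, one_div_mul_cancel hβne, rpow_one]
  have hUβ : U ^ β = u := by
    rw [← Real.rpow_mul hu.le, one_div_mul_cancel hβne, rpow_one]
  have hA : 0 ≤ θ * L + (1 - θ) * U := add_nonneg (mul_nonneg hθ0 hL.le) (mul_nonneg (by linarith) hU0.le)
  have hconv := (convexOn_rpow hβ1).2 (Set.mem_Ici.2 hL.le) (Set.mem_Ici.2 hU0.le)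
      hθ0 (by linarith : (0:ℝ) ≤ 1 - θ) (by ring)
  simp only [smul_eq_mul, hLβ, hUβ] at hconv
  -- hconv : (θ * L + (1-θ) * U) ^ β ≤ θ * ℓ + (1-θ) * u
  have h5 : θ * L + (1 - θ) * U ≤ z ^ (1/β) := by
    have := Real.rpow_le_rpow (rpow_nonneg hA β) (hconv.trans_eq hzθ.symm) (by positivity : (0:ℝ) ≤ 1/β)
    rwa [← Real.rpow_mul hA, mul_one_div_cancel hβne, rpow_one] at this
  calc z = θ * (z₀ + c * L) + (1 - θ) * (z₀ + c * U) := by rw [hz₀L, hz₀U]; exact hzθ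
    _ = z₀ + c * (θ * L + (1 - θ) * U) := by ring
    _ ≤ z₀ + c * z ^ (1/β) := by nlinarith [h5, hc]

lemma chord_eq (hℓ : 0 < ℓ) (hℓu : ℓ < u) (hβ1 : 1 ≤ β)
    (hz₀ : z₀ = (u ^ (1 / β) * ℓ - ℓ ^ (1 / β) * u) / (u ^ (1 / β) - ℓ ^ (1 / β)))
    {z : ℝ} (h1 : ℓ ≤ z) (h2 : z ≤ u) :
    z - z₀ = (u - ℓ) / (u ^ (1 / β) - ℓ ^ (1 / β)) *
      ((u - z) / (u - ℓ) * ℓ ^ (1/β) + (1 - (u - z) / (u - ℓ)) * u ^ (1/β)) := by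
  have hβ0 : (0:ℝ) < β := by linarith
  have hu : 0 < u := lt_trans hℓ hℓu
  have hLU : ℓ ^ (1/β) < u ^ (1/β) := rpow_lt_rpow hℓ.le hℓu (by positivity)
  have hUL : u ^ (1/β) - ℓ ^ (1/β) ≠ 0 := sub_ne_zero.2 hLU.ne'
  have huℓ : u - ℓ ≠ 0 := sub_ne_zero.2 hℓu.ne'
  rw [hz₀]; field_simp; ring

end

lemma chord_eq' {β ℓ u z₀ : ℝ} (hℓ : 0 < ℓ) (hℓu : ℓ < u) (hβ1 : 1 ≤ β)
    (hz₀ : z₀ = (u ^ (1 / β) * ℓ - ℓ ^ (1 / β) * u) / (u ^ (1 / β) - ℓ ^ (1 / β)))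
    (z : ℝ) :
    z - z₀ = (u - ℓ) / (u ^ (1 / β) - ℓ ^ (1 / β)) *
      ((u - z) / (u - ℓ) * ℓ ^ (1/β) + (1 - (u - z) / (u - ℓ)) * u ^ (1/β)) := by
  have hβ0 : (0:ℝ) < β := by linarith
  have hu : 0 < u := lt_trans hℓ hℓu
  have hLU : ℓ ^ (1/β) < u ^ (1/β) := rpow_lt_rpow hℓ.le hℓu (by positivity)
  have hUL : u ^ (1/β) - ℓ ^ (1/β) ≠ 0 := sub_ne_zero.2 hLU.ne'
  have huℓ : u - ℓ ≠ 0 := sub_ne_zero.2 hℓu.ne'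
  rw [hz₀]; field_simp; ring

lemma stepB (n : ℕ) (a : Fin n → ℝ) (ha : ∀ i, 0 < a i) (ℓ u β z₀ γ : ℝ)
    (hℓ : 0 < ℓ) (hℓu : ℓ < u) (hβ : β = ∑ i, a i) (hβ1 : 1 ≤ β)
    (hz₀ : z₀ = (u ^ (1 / β) * ℓ - ℓ ^ (1 / β) * u) / (u ^ (1 / β) - ℓ ^ (1 / β)))
    (hγ : γ = ((u - ℓ) / (u ^ (1 / β) - ℓ ^ (1 / β))) ^ β)
    (y : Fin n → ℝ) (z : ℝ) (hy : ∀ i, 0 ≤ y i)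
    (h1 : ℓ ≤ z) (h2 : z ≤ u) (heq : z - z₀ = (γ * ∏ i, y i ^ a i) ^ (1/β)) :
    (y, z) ∈ convexHull ℝ
      {xz : (Fin n → ℝ) × ℝ | (∀ k, 0 ≤ xz.1 k) ∧
        ℓ ≤ ∏ i, xz.1 i ^ a i ∧ (∏ i, xz.1 i ^ a i) ≤ u ∧
        xz.2 = ∏ i, xz.1 i ^ a i} := by
  have hβ0 : (0:ℝ) < β := by linarith
  have hβne : β ≠ 0 := hβ0.ne'
  have hu : 0 < u := lt_trans hℓ hℓu
  have hL : (0:ℝ) < ℓ ^ (1/β) := rpow_pos_of_pos hℓ _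
  have hU0 : (0:ℝ) < u ^ (1/β) := rpow_pos_of_pos hu _
  have hLU : ℓ ^ (1/β) < u ^ (1/β) := rpow_lt_rpow hℓ.le hℓu (by positivity)
  have hUL : u ^ (1/β) - ℓ ^ (1/β) ≠ 0 := sub_ne_zero.2 hLU.ne'
  have huℓ : u - ℓ ≠ 0 := sub_ne_zero.2 hℓu.ne'
  have hc : 0 < (u - ℓ) / (u ^ (1/β) - ℓ ^ (1/β)) := div_pos (by linarith) (by linarith)
  have hγpos : 0 < γ := by rw [hγ]; exact rpow_pos_of_pos hc β
  have hγc : γ ^ (1/β) = (u - ℓ) / (u ^ (1/β) - ℓ ^ (1/β)) := by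
    rw [hγ, ← Real.rpow_mul hc.le, mul_one_div_cancel hβne, rpow_one]
  have hz₀ℓ : z₀ < ℓ := by
    have := chord_eq' hℓ hℓu hβ1 hz₀ ℓ
    have h3 : (u - ℓ)/(u - ℓ) = 1 := div_self huℓ
    rw [h3] at this
    nlinarith [hc, hL]
  have hzz₀ : 0 < z - z₀ := by linarith
  set T := ∏ i, y i ^ a i with hT_def
  have hT0 : 0 ≤ T := prod_nonneg fun i _ => rpow_nonneg (hy i) _
  have hT : 0 < T := by
    rcases hT0.lt_or_eq with h | h
    · exact h
    · exfalso
      rw [← h, mul_zero, zero_rpow (by positivity : 1/β ≠ 0)] at heq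
      linarith
  have scale : ∀ s : ℝ, 0 ≤ s → ∏ i, (s * y i) ^ a i = s ^ β * T := by
    intro s hs
    calc ∏ i, (s * y i) ^ a i = ∏ i, s ^ a i * y i ^ a i :=
          Finset.prod_congr rfl fun i _ => Real.mul_rpow hs (hy i)
      _ = (∏ i, s ^ a i) * T := Finset.prod_mul_distrib
      _ = s ^ β * T := by rw [← rpow_sum_of_nonneg hs fun i _ => (ha i).le, ← hβ]
  set s₁ := (ℓ / T) ^ (1/β) with hs₁_def
  set s₂ := (u / T) ^ (1/β) with hs₂_def
  have hs₁ : 0 < s₁ := rpow_pos_of_pos (div_pos hℓ hT) _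
  have hs₂ : 0 < s₂ := rpow_pos_of_pos (div_pos hu hT) _
  have hfs₁ : ∏ i, (s₁ * y i) ^ a i = ℓ := by
    rw [scale s₁ hs₁.le, hs₁_def, ← Real.rpow_mul (div_pos hℓ hT).le,
      one_div_mul_cancel hβne, rpow_one, div_mul_cancel₀ _ hT.ne']
  have hfs₂ : ∏ i, (s₂ * y i) ^ a i = u := by
    rw [scale s₂ hs₂.le, hs₂_def, ← Real.rpow_mul (div_pos hu hT).le,
      one_div_mul_cancel hβne, rpow_one, div_mul_cancel₀ _ hT.ne']
  set θ := (u - z) / (u - ℓ) with hθ_def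
  have hθ0 : 0 ≤ θ := div_nonneg (by linarith) (by linarith)
  have hθ1 : θ ≤ 1 := by rw [hθ_def, div_le_one (by linarith)]; linarith
  -- key : T^(1/β) = θ * ℓ^(1/β) + (1-θ) * u^(1/β)
  have hTc : z - z₀ = (u - ℓ) / (u ^ (1/β) - ℓ ^ (1/β)) * T ^ (1/β) := by
    rw [heq, Real.mul_rpow hγpos.le hT0, hγc]
  have key : T ^ (1/β) = θ * ℓ ^ (1/β) + (1 - θ) * u ^ (1/β) := by
    have h5 := chord_eq' hℓ hℓu hβ1 hz₀ z
    rw [← hθ_def] at h5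
    have := hTc.symm.trans h5
    exact mul_left_cancel₀ hc.ne' this
  have hTpow : (0:ℝ) < T ^ (1/β) := rpow_pos_of_pos hT _
  have hss : θ * s₁ + (1 - θ) * s₂ = 1 := by
    rw [hs₁_def, hs₂_def, Real.div_rpow hℓ.le hT0, Real.div_rpow hu.le hT0]
    field_simp
    linarith [key]
  have hzθ : θ * ℓ + (1 - θ) * u = z := by rw [hθ_def]; field_simp; ring
  set p₁ : (Fin n → ℝ) × ℝ := (fun i => s₁ * y i, ℓ) with hp₁_def
  set p₂ : (Fin n → ℝ) × ℝ := (fun i => s₂ * y i, u) with hp₂_def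
  have hp₁ : p₁ ∈ {xz : (Fin n → ℝ) × ℝ | (∀ k, 0 ≤ xz.1 k) ∧
      ℓ ≤ ∏ i, xz.1 i ^ a i ∧ (∏ i, xz.1 i ^ a i) ≤ u ∧ xz.2 = ∏ i, xz.1 i ^ a i} :=
    ⟨fun k => mul_nonneg hs₁.le (hy k), hfs₁.ge, hfs₁.le.trans hℓu.le, hfs₁.symm⟩
  have hp₂ : p₂ ∈ {xz : (Fin n → ℝ) × ℝ | (∀ k, 0 ≤ xz.1 k) ∧
      ℓ ≤ ∏ i, xz.1 i ^ a i ∧ (∏ i, xz.1 i ^ a i) ≤ u ∧ xz.2 = ∏ i, xz.1 i ^ a i} :=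
    ⟨fun k => mul_nonneg hs₂.le (hy k), hℓu.le.trans hfs₂.ge, hfs₂.le, hfs₂.symm⟩
  have combo : θ • p₁ + (1 - θ) • p₂ = (y, z) := by
    rw [hp₁_def, hp₂_def]
    refine Prod.ext ?_ ?_
    · funext i
      simp only [Prod.fst_add, Prod.smul_fst, Pi.add_apply, Pi.smul_apply, smul_eq_mul]
      calc θ * (s₁ * y i) + (1 - θ) * (s₂ * y i) = (θ * s₁ + (1 - θ) * s₂) * y i := by ring
        _ = y i := by rw [hss, one_mul]
    · simp only [Prod.snd_add, Prod.smul_snd, smul_eq_mul]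
      exact hzθ
  rw [← combo]
  exact (convex_convexHull ℝ _) (subset_convexHull ℝ _ hp₁) (subset_convexHull ℝ _ hp₂)
    hθ0 (by linarith) (by ring)

set_option maxHeartbeats 1000000 in
/-- If `β ≥ 1`, then `conv(F(ℝ₊ⁿ)) = K ∩ S`. -/
theorem convexHull_F_eq_of_one_le_beta (n : ℕ) (hn : 2 ≤ n) (a : Fin n → ℝ)
    (ha : ∀ i, 0 < a i) (ℓ u : ℝ) (hℓ : 0 < ℓ) (hℓu : ℓ < u)
    (β z₀ γ : ℝ) (hβ : β = ∑ i, a i) (hβ1 : 1 ≤ β)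
    (hz₀ : z₀ = (u ^ (1 / β) * ℓ - ℓ ^ (1 / β) * u) / (u ^ (1 / β) - ℓ ^ (1 / β)))
    (hγ : γ = ((u - ℓ) / (u ^ (1 / β) - ℓ ^ (1 / β))) ^ β) :
    convexHull ℝ
      {xz : (Fin n → ℝ) × ℝ | (∀ k, 0 ≤ xz.1 k) ∧
        ℓ ≤ ∏ i, xz.1 i ^ a i ∧ (∏ i, xz.1 i ^ a i) ≤ u ∧
        xz.2 = ∏ i, xz.1 i ^ a i} =
    {xz : (Fin n → ℝ) × ℝ | (∀ k, 0 ≤ xz.1 k) ∧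
        ℓ ≤ xz.2 ∧ xz.2 ≤ u ∧
        xz.2 - z₀ ≤ (γ * ∏ i, xz.1 i ^ a i) ^ (1 / β)} := by
  have hβ0 : (0:ℝ) < β := by linarith
  have hβne : β ≠ 0 := hβ0.ne'
  have hu : 0 < u := lt_trans hℓ hℓu
  have hL : (0:ℝ) < ℓ ^ (1/β) := rpow_pos_of_pos hℓ _
  have hU0 : (0:ℝ) < u ^ (1/β) := rpow_pos_of_pos hu _
  have hLU : ℓ ^ (1/β) < u ^ (1/β) := rpow_lt_rpow hℓ.le hℓu (by positivity)
  have hUL : u ^ (1/β) - ℓ ^ (1/β) ≠ 0 := sub_ne_zero.2 hLU.ne'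
  have huℓ : u - ℓ ≠ 0 := sub_ne_zero.2 hℓu.ne'
  have hc : 0 < (u - ℓ) / (u ^ (1/β) - ℓ ^ (1/β)) := div_pos (by linarith) (by linarith)
  have hγpos : 0 < γ := by rw [hγ]; exact rpow_pos_of_pos hc β
  have hγc : γ ^ (1/β) = (u - ℓ) / (u ^ (1/β) - ℓ ^ (1/β)) := by
    rw [hγ, ← Real.rpow_mul hc.le, mul_one_div_cancel hβne, rpow_one]
  have hz₀ℓ : z₀ < ℓ := by
    have h6 := chord_eq' hℓ hℓu hβ1 hz₀ ℓ
    have h3 : (u - ℓ)/(u - ℓ) = 1 := div_self huℓ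
    rw [h3] at h6
    nlinarith [hc, hL]
  have hw : ∀ i, 0 < a i / β := fun i => div_pos (ha i) hβ0
  have hw1 : ∑ i, a i / β = 1 := by rw [← Finset.sum_div, ← hβ, div_self hβne]
  have Grepr : ∀ x : Fin n → ℝ, (∀ i, 0 ≤ x i) →
      (γ * ∏ i, x i ^ a i) ^ (1/β) =
        (u - ℓ)/(u ^ (1/β) - ℓ ^ (1/β)) * ∏ i, x i ^ (a i / β) := by
    intro x hx
    rw [Real.mul_rpow hγpos.le (prod_nonneg fun i _ => rpow_nonneg (hx i) _), hγc]
    congr 1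
    rw [← Real.finset_prod_rpow _ _ (fun i _ => rpow_nonneg (hx i) _)]
    exact Finset.prod_congr rfl fun i _ => by
      rw [← Real.rpow_mul (hx i), mul_one_div]
  apply Set.Subset.antisymm
  · apply convexHull_min
    · rintro p ⟨hx, h1, h2, h3⟩
      have hz0 : 0 ≤ p.2 := by
        rw [h3]; exact prod_nonneg fun i _ => rpow_nonneg (hx i) _
      refine ⟨hx, ?_, ?_, ?_⟩
      · rw [h3]; exact h1
      · rw [h3]; exact h2
      show p.2 - z₀ ≤ (γ * ∏ i, p.1 i ^ a i) ^ (1/β)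
      rw [← h3, Real.mul_rpow hγpos.le hz0, hγc]
      have h7 := chord_le hℓ hℓu hβ1 hz₀ (h3 ▸ h1) (h3 ▸ h2)
      linarith
    · rintro p ⟨hx, hx1, hx2, hx3⟩ q ⟨hy, hy1, hy2, hy3⟩ θ τ hθ hτ hθτ
      rw [Grepr p.1 hx] at hx3
      rw [Grepr q.1 hy] at hy3
      refine ⟨fun k => ?_, ?_, ?_, ?_⟩ <;>
        simp only [Prod.fst_add, Prod.smul_fst, Prod.snd_add, Prod.smul_snd,
          Pi.add_apply, Pi.smul_apply, smul_eq_mul, Set.mem_setOf_eq]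
      · exact add_nonneg (mul_nonneg hθ (hx k)) (mul_nonneg hτ (hy k))
      · nlinarith
      · nlinarith
      · rw [Grepr _ (fun k => add_nonneg (mul_nonneg hθ (hx k)) (mul_nonneg hτ (hy k)))]
        have hgc := geom_concave_aux n (fun i => a i / β) hw hw1 p.1 q.1 hx hy θ τ hθ hτ hθτ
        nlinarith [mul_le_mul_of_nonneg_left hx3 hθ, mul_le_mul_of_nonneg_left hy3 hτ,
          mul_le_mul_of_nonneg_left hgc hc.le]
  · rintro ⟨x, z⟩ ⟨hx, h1, h2, h3⟩
    dsimp only at hx h1 h2 h3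
    have hzz₀ : 0 < z - z₀ := by linarith
    have ht0 : 0 ≤ ∏ i, x i ^ a i := prod_nonneg fun i _ => rpow_nonneg (hx i) _
    have ht : 0 < ∏ i, x i ^ a i := by
      rcases ht0.lt_or_eq with h | h
      · exact h
      · exfalso
        rw [← h, mul_zero, zero_rpow (by positivity : 1/β ≠ 0)] at h3
        linarith
    have hxpos : ∀ i, 0 < x i := by
      intro i
      rcases (hx i).lt_or_eq with h | h
      · exact h
      · exfalso
        have : ∏ i, x i ^ a i = 0 :=
          prod_eq_zero (mem_univ i) (by rw [← h]; exact zero_rpow (ha i).ne')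
        rw [this] at ht; exact lt_irrefl 0 ht
    rcases eq_or_lt_of_le h3 with heq | hlt
    · exact stepB n a ha ℓ u β z₀ γ hℓ hℓu hβ hβ1 hz₀ hγ x z hx h1 h2 heq
    · set i0 : Fin n := ⟨0, by omega⟩ with hi0
      set i1 : Fin n := ⟨1, by omega⟩ with hi1
      set d : Fin n → ℝ := fun i => if i = i0 then 1 else if i = i1 then -1 else 0 with hd
      set X : ℝ → Fin n → ℝ := fun s i => x i + s * d i with hX
      set φ : ℝ → ℝ := fun s => (γ * ∏ i, X s i ^ a i) ^ (1/β) with hφ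
      have hcont : Continuous φ := by
        apply (Real.continuous_rpow_const (by positivity : (0:ℝ) ≤ 1/β)).comp
        apply Continuous.mul continuous_const
        apply continuous_finset_prod
        intro i _
        exact (Real.continuous_rpow_const (ha i).le).comp (continuous_const.add (continuous_id.mul continuous_const))
      have hdi0 : d i0 = 1 := by rw [hd]; simp
      have hdi1 : d i1 = -1 := by
        rw [hd]
        have : i1 ≠ i0 := by rw [hi0, hi1]; exact Fin.ne_of_val_ne (by norm_num)
        simp [this]
      have hφ0 : φ 0 = (γ * ∏ i, x i ^ a i) ^ (1/β) := by
        simp only [hφ, hX, zero_mul, add_zero]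
      have hφa : φ (-(x i0)) = 0 := by
        have hzero : ∏ i, X (-(x i0)) i ^ a i = 0 := by
          refine prod_eq_zero (mem_univ i0) ?_
          have : X (-(x i0)) i0 = 0 := by rw [hX]; simp [hdi1, hdi0]
          rw [this]; exact zero_rpow (ha i0).ne'
        simp only [hφ]
        rw [hzero, mul_zero, zero_rpow (by positivity : 1/β ≠ 0)]
      have hφb : φ (x i1) = 0 := by
        have hzero : ∏ i, X (x i1) i ^ a i = 0 := by
          refine prod_eq_zero (mem_univ i1) ?_
          have : X (x i1) i1 = 0 := by rw [hX]; simp [hdi1]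
          rw [this]; exact zero_rpow (ha i1).ne'
        simp only [hφ]
        rw [hzero, mul_zero, zero_rpow (by positivity : 1/β ≠ 0)]
      have hlt' : z - z₀ < φ 0 := by rw [hφ0]; exact hlt
      obtain ⟨sm, hsmmem, hsm⟩ :=
        intermediate_value_Icc (by linarith [hxpos i0] : -(x i0) ≤ 0) hcont.continuousOn
          (⟨by rw [hφa]; exact hzz₀.le, hlt'.le⟩ : z - z₀ ∈ Set.Icc (φ (-(x i0))) (φ 0))
      obtain ⟨sp, hspmem, hsp⟩ :=
        intermediate_value_Icc' (le_of_lt (hxpos i1) : (0:ℝ) ≤ x i1) hcont.continuousOn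
          (⟨by rw [hφb]; exact hzz₀.le, hlt'.le⟩ : z - z₀ ∈ Set.Icc (φ (x i1)) (φ 0))
      have hsmneg : sm < 0 := by
        rcases lt_or_eq_of_le hsmmem.2 with h | h
        · exact h
        · exfalso; rw [h] at hsm; linarith
      have hsppos : 0 < sp := by
        rcases lt_or_eq_of_le hspmem.1 with h | h
        · exact h
        · exfalso; rw [← h] at hsp; linarith
      have hXnn : ∀ s, -(x i0) ≤ s → s ≤ x i1 → ∀ i, 0 ≤ X s i := by
        intro s hsa hsb i
        rw [hX]
        simp only [hd]
        split_ifs with h h'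
        · subst h; linarith
        · subst h'; linarith
        · simpa using hx i
      have hBm : (X sm, z) ∈ convexHull ℝ
          {xz : (Fin n → ℝ) × ℝ | (∀ k, 0 ≤ xz.1 k) ∧
            ℓ ≤ ∏ i, xz.1 i ^ a i ∧ (∏ i, xz.1 i ^ a i) ≤ u ∧
            xz.2 = ∏ i, xz.1 i ^ a i} :=
        stepB n a ha ℓ u β z₀ γ hℓ hℓu hβ hβ1 hz₀ hγ (X sm) z
          (hXnn sm hsmmem.1 (by linarith [hxpos i1])) h1 h2 hsm.symm
      have hBp : (X sp, z) ∈ convexHull ℝ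
          {xz : (Fin n → ℝ) × ℝ | (∀ k, 0 ≤ xz.1 k) ∧
            ℓ ≤ ∏ i, xz.1 i ^ a i ∧ (∏ i, xz.1 i ^ a i) ≤ u ∧
            xz.2 = ∏ i, xz.1 i ^ a i} :=
        stepB n a ha ℓ u β z₀ γ hℓ hℓu hβ hβ1 hz₀ hγ (X sp) z
          (hXnn sp (by linarith [hxpos i0]) hspmem.2) h1 h2 hsp.symm
      have hdiff : 0 < sp - sm := by linarith
      set lam := sp / (sp - sm) with hlam_def
      set mu := -sm / (sp - sm) with hmu_def
      have hlam : 0 ≤ lam := div_nonneg hsppos.le hdiff.le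
      have hmu : 0 ≤ mu := div_nonneg (by linarith) hdiff.le
      have hsum : lam + mu = 1 := by
        rw [hlam_def, hmu_def, ← add_div, show sp + -sm = sp - sm from by ring]
        exact div_self hdiff.ne'
      have hcombo : lam • ((X sm, z) : (Fin n → ℝ) × ℝ) + mu • ((X sp, z) : (Fin n → ℝ) × ℝ)
          = ((x, z) : (Fin n → ℝ) × ℝ) := by
        have h9 : lam * sm + mu * sp = 0 := by
          rw [hlam_def, hmu_def, div_mul_eq_mul_div, div_mul_eq_mul_div, ← add_div,
            show sp * sm + -sm * sp = 0 from by ring, zero_div]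
        have hXcomb : ∀ i, lam * X sm i + mu * X sp i = x i := by
          intro i
          have hXv : ∀ s, X s i = x i + s * d i := fun s => rfl
          rw [hXv, hXv]
          linear_combination (x i) * hsum + (d i) * h9
        refine Prod.ext ?_ ?_
        · funext i
          simp only [Prod.fst_add, Prod.smul_fst, Pi.add_apply, Pi.smul_apply, smul_eq_mul]
          exact hXcomb i
        · simp only [Prod.snd_add, Prod.smul_snd, smul_eq_mul]
          linear_combination z * hsum
      rw [show ((x, z) : (Fin n → ℝ) × ℝ) = lam • (X sm, z) + mu • (X sp, z) from hcombo.symm]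
      exact (convex_convexHull ℝ _) hBm hBp hlam hmu hsum
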